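/- Let d' > r ≥ 1 be integers and a_1, ..., a_{d'-r} nonnegative integers. Any d' of the d'+2 Kleinschmidt ray vectors obtained by removing one vector x_i (1 ≤ i ≤ d'-r+1) and one vector y_j (1 ≤ j ≤ r+1) form a Z-basis of Z^{d'}, i.e. the matrix they form has determinant ±1. -/

import Mathlib

/-- Removing one `x`-ray and one `y`-ray from the Kleinschmidt rays leaves a
`ℤ`-basis of `ℤ^{d'}` (determinant `±1`, i.e. linearly independent and spanning). -/
theorem kleinschmidt_maximal_cones_smooth (d' r : ℕ) (hr : 1 ≤ r) (hrd : r < d')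
    (a : Fin (d' - r) → ℤ) (ha : ∀ i, 0 ≤ a i)
    (i0 : Fin (d' - r + 1)) (j0 : Fin (r + 1)) :
    let X : Fin (d' - r + 1) → Fin d' → ℤ := fun i k =>
      if (i : ℕ) < d' - r then (if (k : ℕ) = (i : ℕ) then 1 else 0)
      else (if (k : ℕ) < d' - r then -1 else 0)
    let Y : Fin (r + 1) → Fin d' → ℤ := fun j k =>
      if (j : ℕ) < r then (if (k : ℕ) = (d' - r) + (j : ℕ) then 1 else 0)
      else (if h : (k : ℕ) < d' - r then a ⟨(k : ℕ), h⟩ else -1)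
    let V : {p : Fin (d' - r + 1) ⊕ Fin (r + 1) // p ≠ Sum.inl i0 ∧ p ≠ Sum.inr j0} →
        Fin d' → ℤ := fun p => Sum.elim X Y p.1
    LinearIndependent ℤ V ∧ Submodule.span ℤ (Set.range V) = ⊤ := by
  intro X Y V
  have hmr : (d' - r) + r = d' := Nat.sub_add_cancel hrd.le
  -- sum of indicator over Fin (d' - r)
  have h1 : ∀ (k : Fin d'), (∑ i : Fin (d' - r), if (k : ℕ) = (i : ℕ) then (1:ℤ) else 0)
      = if (k : ℕ) < d' - r then 1 else 0 := by
    intro k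
    rw [Fin.sum_univ_eq_sum_range (fun n => if (k : ℕ) = n then (1:ℤ) else 0)]
    rw [Finset.sum_ite_eq]
    simp [Finset.mem_range]
  have h2 : ∀ (k : Fin d'), (∑ j : Fin r, if (k : ℕ) = (d' - r) + (j : ℕ) then (1:ℤ) else 0)
      = if d' - r ≤ (k : ℕ) then 1 else 0 := by
    intro k
    have hkd : (k : ℕ) < d' := k.isLt
    rw [Fin.sum_univ_eq_sum_range (fun n => if (k : ℕ) = (d' - r) + n then (1:ℤ) else 0)]
    by_cases hk : d' - r ≤ (k : ℕ)
    · rw [if_pos hk]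
      rw [Finset.sum_eq_single ((k : ℕ) - (d' - r))]
      · rw [if_pos (by omega)]
      · intro b _ hb
        rw [if_neg (by omega)]
      · intro hmem
        exact absurd (Finset.mem_range.2 (by omega)) hmem
    · rw [if_neg hk, Finset.sum_eq_zero]
      intro b _
      rw [if_neg (by omega)]
  -- the x-rays sum to zero
  have hXsum : (∑ i : Fin (d' - r + 1), X i) = 0 := by
    funext k
    simp only [Finset.sum_apply, Pi.zero_apply]
    rw [Fin.sum_univ_castSucc]
    have hcast : ∀ i : Fin (d' - r), X i.castSucc k
        = if (k : ℕ) = (i : ℕ) then (1:ℤ) else 0 := by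
      intro i
      simp only [X, Fin.coe_castSucc, if_pos i.isLt]
    have hlast : X (Fin.last (d' - r)) k = if (k : ℕ) < d' - r then (-1 : ℤ) else 0 := by
      simp only [X, Fin.val_last, if_neg (lt_irrefl (d' - r))]
    rw [Finset.sum_congr rfl (fun i _ => hcast i), hlast, h1 k]
    by_cases hk : (k : ℕ) < d' - r <;> simp [hk]
  -- the y-rays sum to ∑ a i • x i
  have hYsum : (∑ j : Fin (r + 1), Y j) = ∑ i : Fin (d' - r), a i • X i.castSucc := by
    funext k
    simp only [Finset.sum_apply, Pi.smul_apply, smul_eq_mul]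
    have hrhs : (∑ i : Fin (d' - r), a i * X i.castSucc k)
        = if h : (k : ℕ) < d' - r then a ⟨(k : ℕ), h⟩ else 0 := by
      have hc : ∀ i : Fin (d' - r), a i * X i.castSucc k
          = if (k : ℕ) = (i : ℕ) then a i else 0 := by
        intro i
        simp only [X, Fin.coe_castSucc, if_pos i.isLt]
        by_cases hki : (k : ℕ) = (i : ℕ) <;> simp [hki]
      rw [Finset.sum_congr rfl (fun i _ => hc i)]
      by_cases hk : (k : ℕ) < d' - r
      · rw [dif_pos hk, Finset.sum_eq_single (⟨(k : ℕ), hk⟩ : Fin (d' - r))]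
        · simp
        · intro b _ hb
          rw [if_neg (fun h => hb (by apply Fin.ext; exact h.symm))]
        · intro hmem
          exact absurd (Finset.mem_univ _) hmem
      · rw [dif_neg hk, Finset.sum_eq_zero]
        intro b _
        rw [if_neg (by omega)]
    rw [hrhs]
    rw [Fin.sum_univ_castSucc]
    have hcast : ∀ j : Fin r, Y j.castSucc k
        = if (k : ℕ) = (d' - r) + (j : ℕ) then (1:ℤ) else 0 := by
      intro j
      simp only [Y, Fin.coe_castSucc, if_pos j.isLt]
    have hlast : Y (Fin.last r) k
        = if h : (k : ℕ) < d' - r then a ⟨(k : ℕ), h⟩ else -1 := by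
      simp only [Y, Fin.val_last, if_neg (lt_irrefl r)]
    rw [Finset.sum_congr rfl (fun j _ => hcast j), hlast, h2 k]
    by_cases hk : (k : ℕ) < d' - r
    · rw [if_neg (by omega), dif_pos hk, dif_pos hk, zero_add]
    · rw [if_pos (by omega), dif_neg hk, dif_neg hk]
      ring
  set S := Submodule.span ℤ (Set.range V) with hS
  -- membership of all x-rays
  have hXne : ∀ i, i ≠ i0 → X i ∈ S := by
    intro i hi
    exact Submodule.subset_span ⟨⟨Sum.inl i, by simp [hi], by simp⟩, rfl⟩
  have hXmem : ∀ i, X i ∈ S := by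
    intro i
    by_cases hi : i = i0
    · subst hi
      have hsum : (∑ j ∈ Finset.univ.erase i, X j) ∈ S :=
        Submodule.sum_mem _ (fun j hj => hXne j (Finset.ne_of_mem_erase hj))
      have heq : X i = -∑ j ∈ Finset.univ.erase i, X j := by
        have h := Finset.add_sum_erase Finset.univ X (Finset.mem_univ i)
        rw [hXsum] at h
        linear_combination (norm := abel) h
      rw [heq]
      exact Submodule.neg_mem _ hsum
    · exact hXne i hi
  have hYne : ∀ j, j ≠ j0 → Y j ∈ S := by
    intro j hj
    exact Submodule.subset_span ⟨⟨Sum.inr j, by simp, by simp [hj]⟩, rfl⟩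
  have hYmem : ∀ j, Y j ∈ S := by
    intro j
    by_cases hj : j = j0
    · subst hj
      have hsum : (∑ t ∈ Finset.univ.erase j, Y t) ∈ S :=
        Submodule.sum_mem _ (fun t ht => hYne t (Finset.ne_of_mem_erase ht))
      have hax : (∑ i : Fin (d' - r), a i • X i.castSucc) ∈ S :=
        Submodule.sum_mem _ (fun i _ => Submodule.smul_mem _ _ (hXmem _))
      have heq : Y j = (∑ i : Fin (d' - r), a i • X i.castSucc)
          - ∑ t ∈ Finset.univ.erase j, Y t := by
        have h := Finset.add_sum_erase Finset.univ Y (Finset.mem_univ j)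
        rw [hYsum] at h
        linear_combination (norm := abel) h
      rw [heq]
      exact Submodule.sub_mem _ hax hsum
    · exact hYne j hj
  -- spanning
  have hspan : S = ⊤ := by
    rw [eq_top_iff, ← (Pi.basisFun ℤ (Fin d')).span_eq, Submodule.span_le]
    rintro _ ⟨k, rfl⟩
    rw [Pi.basisFun_apply]
    by_cases hk : (k : ℕ) < d' - r
    · have heq : Pi.single k (1:ℤ) = X ⟨(k : ℕ), by omega⟩ := by
        funext t
        simp only [X, if_pos hk]
        rw [Pi.single_apply]
        by_cases ht : t = k
        · rw [if_pos ht, if_pos (by rw [ht])]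
        · rw [if_neg ht, if_neg (fun h => ht (Fin.ext h))]
      rw [heq]; exact hXmem _
    · have hkr : (k : ℕ) - (d' - r) < r := by have := k.isLt; omega
      have heq : Pi.single k (1:ℤ) = Y ⟨(k : ℕ) - (d' - r), by omega⟩ := by
        funext t
        simp only [Y, if_pos hkr]
        rw [Pi.single_apply]
        by_cases ht : t = k
        · rw [if_pos ht, if_pos (by rw [ht]; omega)]
        · rw [if_neg ht, if_neg (fun h => ht (Fin.ext (by omega)))]
      rw [heq]; exact hYmem _
  -- cardinality
  have hcard : Fintype.card {p : Fin (d' - r + 1) ⊕ Fin (r + 1) //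
      p ≠ Sum.inl i0 ∧ p ≠ Sum.inr j0} = d' := by
    have e1 : Fintype.card {p : Fin (d' - r + 1) ⊕ Fin (r + 1) //
        p ≠ Sum.inl i0 ∧ p ≠ Sum.inr j0}
        = (Finset.univ.filter (fun p : Fin (d' - r + 1) ⊕ Fin (r + 1) =>
            p ≠ Sum.inl i0 ∧ p ≠ Sum.inr j0)).card := Fintype.card_subtype _
    have e2 : (Finset.univ.filter (fun p : Fin (d' - r + 1) ⊕ Fin (r + 1) =>
            p ≠ Sum.inl i0 ∧ p ≠ Sum.inr j0))
        = Finset.univ \ {Sum.inl i0, Sum.inr j0} := by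
      ext p; simp [and_comm]
    rw [e1, e2, Finset.card_sdiff_of_subset (by simp)]
    have h3 : ({Sum.inl i0, Sum.inr j0} :
        Finset (Fin (d' - r + 1) ⊕ Fin (r + 1))).card = 2 := by
      rw [Finset.card_insert_of_notMem (by simp), Finset.card_singleton]
    rw [h3]
    simp only [Finset.card_univ, Fintype.card_sum, Fintype.card_fin]
    omega
  -- linear independence via surjective endomorphism
  have li : LinearIndependent ℤ V := by
    set T := Fintype.linearCombination ℤ V with hT
    have hTsurj : Function.Surjective T := by
      rw [← LinearMap.range_eq_top, Fintype.range_linearCombination, ← hS, hspan]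
    obtain e := Fintype.equivFinOfCardEq hcard
    set E : (Fin d' → ℤ) →ₗ[ℤ] (Fin d' → ℤ) :=
      T.comp (LinearEquiv.funCongrLeft ℤ ℤ e).toLinearMap with hE
    have hEsurj : Function.Surjective E :=
      hTsurj.comp (LinearEquiv.funCongrLeft ℤ ℤ e).surjective
    have hEinj : Function.Injective E :=
      OrzechProperty.injective_of_surjective_endomorphism E hEsurj
    have hTinj : Function.Injective T := by
      intro c c' hcc
      have h4 : E ((LinearEquiv.funCongrLeft ℤ ℤ e).symm c)
          = E ((LinearEquiv.funCongrLeft ℤ ℤ e).symm c') := by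
        simp only [hE, LinearMap.comp_apply, LinearEquiv.coe_coe,
          LinearEquiv.apply_symm_apply, hcc]
      exact (LinearEquiv.funCongrLeft ℤ ℤ e).symm.injective (hEinj h4)
    rw [Fintype.linearIndependent_iff]
    intro g hg i
    have h7 : T g = T 0 := by
      rw [Fintype.linearCombination_apply, hg, map_zero]
    rw [hTinj h7]
    rfl
  exact ⟨li, hspan⟩
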